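/- For every positive integer n, a(3,n) ≤ 2 + ⌈log₂ a(2,n)⌉. -/

import Mathlib

/-- The Ackermann function: `A 1 j = 2^j`, `A (i+1) 1 = A i 2`,
`A (i+1) (j+1) = A i (A (i+1) j)` for `i, j ≥ 1`. Values at `i = 0` or `j = 0`
are irrelevant (set to `0`). -/
def ackFn : ℕ → ℕ → ℕ
  | 0, _ => 0
  | 1, j => 2 ^ j
  | _ + 2, 0 => 0
  | i + 2, 1 => ackFn (i + 1) 2
  | i + 2, j + 2 => ackFn (i + 1) (ackFn (i + 2) (j + 1))
termination_by i j => (i, j)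

/-- Row inverse of the Ackermann function: `a(i,n) = min {j ≥ 1 : A(i,j) > ⌊log₂ n⌋}`. -/
noncomputable def ackRowInv (i n : ℕ) : ℕ :=
  sInf {j : ℕ | 1 ≤ j ∧ Nat.log 2 n < ackFn i j}

lemma ack2_succ (m : ℕ) (hm : 1 ≤ m) : ackFn 2 (m + 1) = 2 ^ ackFn 2 m := by
  obtain ⟨j, rfl⟩ := Nat.exists_eq_add_of_le hm
  rw [show (1 + j + 1 = j + 2) by omega, show (1 + j = j + 1) by omega]
  rw [ackFn]
  simp [ackFn]

lemma ack2_ge (m : ℕ) (hm : 1 ≤ m) : 2 ^ m ≤ ackFn 2 m := by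
  induction m with
  | zero => omega
  | succ k ih =>
    rcases Nat.eq_or_lt_of_le hm with h | h
    · simp [← h, ackFn]
    · have hk : 1 ≤ k := by omega
      rw [ack2_succ k hk]
      exact Nat.pow_le_pow_right (by norm_num)
        (le_trans (Nat.succ_le_of_lt (Nat.lt_two_pow_self (n := k))) (ih hk))

lemma ack2_mono {m m' : ℕ} (hm : 1 ≤ m) (h : m ≤ m') : ackFn 2 m ≤ ackFn 2 m' := by
  induction m' with
  | zero => omega
  | succ k ih =>
    rcases Nat.eq_or_lt_of_le h with h' | h'
    · rw [h']
    · have hk : m ≤ k := by omega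
      have hk1 : 1 ≤ k := le_trans hm hk
      rw [ack2_succ k hk1]
      exact le_trans (ih hk) (Nat.le_of_lt (Nat.lt_two_pow_self))

lemma ack3_succ (m : ℕ) (hm : 1 ≤ m) : ackFn 3 (m + 1) = ackFn 2 (ackFn 3 m) := by
  obtain ⟨j, rfl⟩ := Nat.exists_eq_add_of_le hm
  rw [show (1 + j + 1 = j + 2) by omega, show (1 + j = j + 1) by omega]
  rw [ackFn]

lemma ack3_ge (m : ℕ) (hm : 1 ≤ m) : 2 ^ m ≤ ackFn 3 m := by
  induction m with
  | zero => omega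
  | succ k ih =>
    rcases Nat.eq_or_lt_of_le hm with h | h
    · simp [← h]; rw [show (3:ℕ) = 1 + 2 from rfl, ackFn]; simp [ackFn]
    · have hk : 1 ≤ k := by omega
      have h1 : 2 ^ k ≤ ackFn 3 k := ih hk
      rw [ack3_succ k hk]
      calc 2 ^ (k + 1) ≤ 2 ^ (2 ^ k) :=
            Nat.pow_le_pow_right (by norm_num) (Nat.succ_le_of_lt (Nat.lt_two_pow_self (n := k)))
        _ ≤ 2 ^ ackFn 3 k := Nat.pow_le_pow_right (by norm_num) h1
        _ ≤ ackFn 2 (ackFn 3 k) := ack2_ge _ (le_trans (Nat.one_le_two_pow) h1)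

/-- For every positive integer `n`, `a(3,n) ≤ 2 + ⌈log₂ a(2,n)⌉`. -/
theorem ackRowInv_three_le (n : ℕ) (hn : 1 ≤ n) :
    ackRowInv 3 n ≤ 2 + Nat.clog 2 (ackRowInv 2 n) := by
  set L := Nat.log 2 n with hL
  have hne : {j : ℕ | 1 ≤ j ∧ L < ackFn 2 j}.Nonempty := by
    refine ⟨L + 1, by omega, ?_⟩
    exact lt_of_lt_of_le ((Nat.lt_two_pow_self (n := L)) |>.trans_le
      (Nat.pow_le_pow_right (by norm_num) (by omega))) (ack2_ge _ (by omega))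
  have hk := Nat.sInf_mem hne
  set k := ackRowInv 2 n with hkdef
  have hk1 : 1 ≤ k := hk.1
  have hkL : L < ackFn 2 k := hk.2
  set c := Nat.clog 2 k with hc
  have hkc : k ≤ 2 ^ c := Nat.le_pow_clog (by norm_num) k
  -- A(3, 1+c) ≥ 2^(1+c) ≥ k
  have h1 : k ≤ ackFn 3 (c + 1) := by
    calc k ≤ 2 ^ c := hkc
      _ ≤ 2 ^ (c + 1) := Nat.pow_le_pow_right (by norm_num) (by omega)
      _ ≤ ackFn 3 (c + 1) := ack3_ge _ (by omega)
  have h2 : L < ackFn 3 (c + 2) := by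
    rw [show c + 2 = (c + 1) + 1 by rfl, ack3_succ _ (by omega)]
    exact lt_of_lt_of_le hkL (ack2_mono hk1 h1)
  have : (2 + c) ∈ {j : ℕ | 1 ≤ j ∧ L < ackFn 3 j} := by
    refine ⟨by omega, ?_⟩
    rw [show 2 + c = c + 2 by omega]
    exact h2
  exact Nat.sInf_le this
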